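/- The gauge function ρ(x,y,t) = ((x²+y²)²+t²)^{1/4} satisfies, away from the origin, X²ρ = 3r^{-7/4}(y(x²+y²)-xt)² ≥ 0 and Y²ρ = 3r^{-7/4}(x(x²+y²)+yt)² ≥ 0 where r = (x²+y²)²+t², and det H(ρ) = 0; in particular ρ is H-convex on ℝ³∖{0}. -/
import Mathlib


noncomputable section

abbrev H1 := ℝ × ℝ × ℝ

/-- Heisenberg group multiplication: ξ₀∘ξ = (x₀+x, y₀+y, t₀+t+2(x y₀ - y x₀)). -/
def hmul (a b : H1) : H1 :=
  (a.1 + b.1, a.2.1 + b.2.1, a.2.2 + b.2.2 + 2 * (b.1 * a.2.1 - b.2.1 * a.1))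

def hinv (a : H1) : H1 := (-a.1, -a.2.1, -a.2.2)

/-- r = (x²+y²)² + t². -/
def rfun (a : H1) : ℝ := (a.1 ^ 2 + a.2.1 ^ 2) ^ 2 + a.2.2 ^ 2

/-- The Heisenberg gauge ρ(x,y,t) = ((x²+y²)²+t²)^(1/4). -/
def hgauge (a : H1) : ℝ := rfun a ^ ((1 : ℝ) / 4)

/-- d(ξ,ξ₀) = ρ(ξ₀⁻¹ ∘ ξ). -/
def hdist (a b : H1) : ℝ := hgauge (hmul (hinv b) a)

/-- Heisenberg dilations. -/
def dil (l : ℝ) (a : H1) : H1 := (l * a.1, l * a.2.1, l ^ 2 * a.2.2)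

/-- X = ∂_x + 2y ∂_t. -/
def Xop (f : H1 → ℝ) (p : H1) : ℝ :=
  fderiv ℝ f p (1, 0, 0) + 2 * p.2.1 * fderiv ℝ f p (0, 0, 1)

/-- Y = ∂_y - 2x ∂_t. -/
def Yop (f : H1 → ℝ) (p : H1) : ℝ :=
  fderiv ℝ f p (0, 1, 0) - 2 * p.1 * fderiv ℝ f p (0, 0, 1)

/-- T = ∂_t. -/
def Tder (f : H1 → ℝ) (p : H1) : ℝ := fderiv ℝ f p (0, 0, 1)

/-- (XYu + YXu)/2. -/
def symXY (f : H1 → ℝ) (p : H1) : ℝ := (Xop (Yop f) p + Yop (Xop f) p) / 2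

/-- det of the symmetrized horizontal Hessian. -/
def detH (u : H1 → ℝ) (p : H1) : ℝ :=
  Xop (Xop u) p * Yop (Yop u) p - symXY u p ^ 2

/-- Positive semidefiniteness of the symmetrized horizontal Hessian at p. -/
def PSDat (u : H1 → ℝ) (p : H1) : Prop :=
  ∀ h : ℝ × ℝ,
    0 ≤ Xop (Xop u) p * h.1 ^ 2 + 2 * symXY u p * h.1 * h.2 + Yop (Yop u) p * h.2 ^ 2

/-- The horizontal plane Π_{ξ₀}. -/
def hplane (a : H1) : Set H1 :=
  {p | p.2.2 - a.2.2 - 2 * (p.1 * a.2.1 - p.2.1 * a.1) = 0}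

/-- H-convexity of a continuous function on a set, via convexity along horizontal planes. -/
def HConvexSet (S : Set H1) (u : H1 → ℝ) : Prop :=
  ContinuousOn u S ∧
  ∀ a ∈ S, ∀ b ∈ S, b ∈ hplane a → ∀ l ∈ Set.Icc (0 : ℝ) 1,
    hmul a (dil l (hmul (hinv a) b)) ∈ S →
    u (hmul a (dil l (hmul (hinv a) b))) ≤ u a + l * (u b - u a)


open ContinuousLinearMap Filter

namespace Stmt7Aux

def pi1 : H1 →L[ℝ] ℝ := ContinuousLinearMap.fst ℝ ℝ (ℝ × ℝ)
def pi2 : H1 →L[ℝ] ℝ := (ContinuousLinearMap.fst ℝ ℝ ℝ).comp (ContinuousLinearMap.snd ℝ ℝ (ℝ × ℝ))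
def pi3 : H1 →L[ℝ] ℝ := (ContinuousLinearMap.snd ℝ ℝ ℝ).comp (ContinuousLinearMap.snd ℝ ℝ (ℝ × ℝ))

@[simp] lemma pi1_apply (v : H1) : pi1 v = v.1 := rfl
@[simp] lemma pi2_apply (v : H1) : pi2 v = v.2.1 := rfl
@[simp] lemma pi3_apply (v : H1) : pi3 v = v.2.2 := rfl

lemma hc1 (p : H1) : HasFDerivAt (fun q : H1 => q.1) pi1 p := pi1.hasFDerivAt
lemma hc2 (p : H1) : HasFDerivAt (fun q : H1 => q.2.1) pi2 p := pi2.hasFDerivAt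
lemma hc3 (p : H1) : HasFDerivAt (fun q : H1 => q.2.2) pi3 p := pi3.hasFDerivAt

def Dr (p : H1) : H1 →L[ℝ] ℝ :=
  (4 * p.1 * (p.1 ^ 2 + p.2.1 ^ 2)) • pi1 + (4 * p.2.1 * (p.1 ^ 2 + p.2.1 ^ 2)) • pi2
    + (2 * p.2.2) • pi3

@[simp] lemma Dr_apply (p v : H1) :
    Dr p v = 4 * p.1 * (p.1 ^ 2 + p.2.1 ^ 2) * v.1
      + 4 * p.2.1 * (p.1 ^ 2 + p.2.1 ^ 2) * v.2.1 + 2 * p.2.2 * v.2.2 := by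
  simp [Dr]

lemma hasFDerivAt_rfun (p : H1) : HasFDerivAt rfun (Dr p) p := by
  have hrw : rfun = fun q : H1 =>
      (q.1 * q.1 + q.2.1 * q.2.1) * (q.1 * q.1 + q.2.1 * q.2.1) + q.2.2 * q.2.2 := by
    funext q; simp only [rfun]; ring
  rw [hrw]
  have H := ((((hc1 p).mul (hc1 p)).add ((hc2 p).mul (hc2 p))).mul
      (((hc1 p).mul (hc1 p)).add ((hc2 p).mul (hc2 p)))).add ((hc3 p).mul (hc3 p))
  exact H.congr_fderiv (ContinuousLinearMap.ext fun v => by simp [Dr]; ring)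

lemma rfun_pos {p : H1} (hp : p ≠ 0) : 0 < rfun p := by
  have hne : p.1 ≠ 0 ∨ p.2.1 ≠ 0 ∨ p.2.2 ≠ 0 := by
    by_contra h
    push_neg at h
    exact hp (by
      obtain ⟨a, b, c⟩ := h
      exact Prod.ext a (Prod.ext b c))
  unfold rfun
  rcases hne with h | h | h
  · have : 0 < p.1 ^ 2 := (sq_nonneg p.1).lt_of_ne' (pow_ne_zero 2 h)
    nlinarith [sq_nonneg p.2.1, sq_nonneg p.2.2, sq_nonneg (p.1 ^ 2 + p.2.1 ^ 2)]
  · have : 0 < p.2.1 ^ 2 := (sq_nonneg p.2.1).lt_of_ne' (pow_ne_zero 2 h)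
    nlinarith [sq_nonneg p.1, sq_nonneg p.2.2, sq_nonneg (p.1 ^ 2 + p.2.1 ^ 2)]
  · have : 0 < p.2.2 ^ 2 := (sq_nonneg p.2.2).lt_of_ne' (pow_ne_zero 2 h)
    nlinarith [sq_nonneg (p.1 ^ 2 + p.2.1 ^ 2)]

def Pf (q : H1) : ℝ := q.1 * (q.1 ^ 2 + q.2.1 ^ 2) + q.2.1 * q.2.2
def Qf (q : H1) : ℝ := q.2.1 * (q.1 ^ 2 + q.2.1 ^ 2) - q.1 * q.2.2

def DP (p : H1) : H1 →L[ℝ] ℝ :=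
  (3 * p.1 ^ 2 + p.2.1 ^ 2) • pi1 + (2 * p.1 * p.2.1 + p.2.2) • pi2 + p.2.1 • pi3
def DQ (p : H1) : H1 →L[ℝ] ℝ :=
  (2 * p.1 * p.2.1 - p.2.2) • pi1 + (p.1 ^ 2 + 3 * p.2.1 ^ 2) • pi2 + (-p.1) • pi3

lemma hasFDerivAt_Pf (p : H1) : HasFDerivAt Pf (DP p) p := by
  have hrw : Pf = fun q : H1 =>
      q.1 * (q.1 * q.1 + q.2.1 * q.2.1) + q.2.1 * q.2.2 := by
    funext q; simp only [Pf]; ring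
  rw [hrw]
  have H := ((hc1 p).mul (((hc1 p).mul (hc1 p)).add ((hc2 p).mul (hc2 p)))).add
      ((hc2 p).mul (hc3 p))
  exact H.congr_fderiv (ContinuousLinearMap.ext fun v => by simp [DP]; ring)

lemma hasFDerivAt_Qf (p : H1) : HasFDerivAt Qf (DQ p) p := by
  have hrw : Qf = fun q : H1 =>
      q.2.1 * (q.1 * q.1 + q.2.1 * q.2.1) - q.1 * q.2.2 := by
    funext q; simp only [Qf]; ring
  rw [hrw]
  have H := ((hc2 p).mul (((hc1 p).mul (hc1 p)).add ((hc2 p).mul (hc2 p)))).sub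
      ((hc1 p).mul (hc3 p))
  exact H.congr_fderiv (ContinuousLinearMap.ext fun v => by simp [DQ]; ring)

lemma hasFDerivAt_hgauge {p : H1} (hp : 0 < rfun p) :
    HasFDerivAt hgauge (((1 / 4 : ℝ) * rfun p ^ ((1 : ℝ) / 4 - 1)) • Dr p) p :=
  (hasFDerivAt_rfun p).rpow_const (Or.inl hp.ne')

lemma Xop_hgauge {p : H1} (hp : 0 < rfun p) :
    Xop hgauge p = Pf p * rfun p ^ (-(3 : ℝ) / 4) := by
  have h := (hasFDerivAt_hgauge hp).fderiv
  have he : (1 : ℝ) / 4 - 1 = -(3 : ℝ) / 4 := by norm_num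
  rw [Xop, h, he]
  simp [Pf]
  ring

lemma Yop_hgauge {p : H1} (hp : 0 < rfun p) :
    Yop hgauge p = Qf p * rfun p ^ (-(3 : ℝ) / 4) := by
  have h := (hasFDerivAt_hgauge hp).fderiv
  have he : (1 : ℝ) / 4 - 1 = -(3 : ℝ) / 4 := by norm_num
  rw [Yop, h, he]
  simp [Qf]
  ring

lemma isOpen_pos_rfun : IsOpen {q : H1 | 0 < rfun q} := by
  have hc : Continuous rfun := by unfold rfun; fun_prop
  exact isOpen_lt continuous_const hc

lemma Xop_eventually {p : H1} (hp : 0 < rfun p) :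
    Xop hgauge =ᶠ[nhds p] fun q => Pf q * rfun q ^ (-(3 : ℝ) / 4) :=
  eventually_of_mem (isOpen_pos_rfun.mem_nhds hp) fun _ hq => Xop_hgauge hq

lemma Yop_eventually {p : H1} (hp : 0 < rfun p) :
    Yop hgauge =ᶠ[nhds p] fun q => Qf q * rfun q ^ (-(3 : ℝ) / 4) :=
  eventually_of_mem (isOpen_pos_rfun.mem_nhds hp) fun _ hq => Yop_hgauge hq

lemma hasFDerivAt_P_rpow {p : H1} (hp : 0 < rfun p) :
    HasFDerivAt (fun q => Pf q * rfun q ^ (-(3 : ℝ) / 4))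
      (Pf p • ((-(3 : ℝ) / 4 * rfun p ^ (-(3 : ℝ) / 4 - 1)) • Dr p)
        + (rfun p ^ (-(3 : ℝ) / 4)) • DP p) p :=
  (hasFDerivAt_Pf p).mul ((hasFDerivAt_rfun p).rpow_const (Or.inl hp.ne'))

lemma hasFDerivAt_Q_rpow {p : H1} (hp : 0 < rfun p) :
    HasFDerivAt (fun q => Qf q * rfun q ^ (-(3 : ℝ) / 4))
      (Qf p • ((-(3 : ℝ) / 4 * rfun p ^ (-(3 : ℝ) / 4 - 1)) • Dr p)
        + (rfun p ^ (-(3 : ℝ) / 4)) • DQ p) p :=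
  (hasFDerivAt_Qf p).mul ((hasFDerivAt_rfun p).rpow_const (Or.inl hp.ne'))

lemma rpow_split {p : H1} (hp : 0 < rfun p) :
    rfun p ^ (-(3 : ℝ) / 4) = rfun p * rfun p ^ (-(7 : ℝ) / 4) := by
  rw [show (-(3 : ℝ) / 4) = 1 + (-(7 : ℝ) / 4) by norm_num, Real.rpow_add hp, Real.rpow_one]

lemma rpow_shift : (-(3 : ℝ) / 4 - 1) = -(7 : ℝ) / 4 := by norm_num

lemma XX_formula {p : H1} (hp : 0 < rfun p) :
    Xop (Xop hgauge) p = 3 * rfun p ^ (-(7 : ℝ) / 4) * Qf p ^ 2 := by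
  have hfd : fderiv ℝ (Xop hgauge) p =
      Pf p • ((-(3 : ℝ) / 4 * rfun p ^ (-(3 : ℝ) / 4 - 1)) • Dr p)
        + (rfun p ^ (-(3 : ℝ) / 4)) • DP p :=
    ((Xop_eventually hp).fderiv_eq).trans (hasFDerivAt_P_rpow hp).fderiv
  rw [Xop, hfd, rpow_shift]
  simp only [ContinuousLinearMap.add_apply, ContinuousLinearMap.smul_apply,
    ContinuousLinearMap.sub_apply, ContinuousLinearMap.neg_apply, Dr_apply, DP, DQ,
    pi1_apply, pi2_apply, pi3_apply, smul_eq_mul, neg_smul]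
  rw [rpow_split hp]
  unfold rfun Pf Qf
  ring

lemma YY_formula {p : H1} (hp : 0 < rfun p) :
    Yop (Yop hgauge) p = 3 * rfun p ^ (-(7 : ℝ) / 4) * Pf p ^ 2 := by
  have hfd : fderiv ℝ (Yop hgauge) p =
      Qf p • ((-(3 : ℝ) / 4 * rfun p ^ (-(3 : ℝ) / 4 - 1)) • Dr p)
        + (rfun p ^ (-(3 : ℝ) / 4)) • DQ p :=
    ((Yop_eventually hp).fderiv_eq).trans (hasFDerivAt_Q_rpow hp).fderiv
  rw [Yop, hfd, rpow_shift]
  simp only [ContinuousLinearMap.add_apply, ContinuousLinearMap.smul_apply,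
    ContinuousLinearMap.sub_apply, ContinuousLinearMap.neg_apply, Dr_apply, DP, DQ,
    pi1_apply, pi2_apply, pi3_apply, smul_eq_mul, neg_smul]
  rw [rpow_split hp]
  unfold rfun Pf Qf
  ring

lemma XY_formula {p : H1} (hp : 0 < rfun p) :
    Xop (Yop hgauge) p = -p.2.2 * rfun p ^ (-(3 : ℝ) / 4)
      - 3 * Pf p * Qf p * rfun p ^ (-(7 : ℝ) / 4) := by
  have hfd : fderiv ℝ (Yop hgauge) p =
      Qf p • ((-(3 : ℝ) / 4 * rfun p ^ (-(3 : ℝ) / 4 - 1)) • Dr p)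
        + (rfun p ^ (-(3 : ℝ) / 4)) • DQ p :=
    ((Yop_eventually hp).fderiv_eq).trans (hasFDerivAt_Q_rpow hp).fderiv
  rw [Xop, hfd, rpow_shift]
  simp only [ContinuousLinearMap.add_apply, ContinuousLinearMap.smul_apply,
    ContinuousLinearMap.sub_apply, ContinuousLinearMap.neg_apply, Dr_apply, DP, DQ,
    pi1_apply, pi2_apply, pi3_apply, smul_eq_mul, neg_smul]
  rw [rpow_split hp]
  unfold rfun Pf Qf
  ring

lemma YX_formula {p : H1} (hp : 0 < rfun p) :
    Yop (Xop hgauge) p = p.2.2 * rfun p ^ (-(3 : ℝ) / 4)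
      - 3 * Pf p * Qf p * rfun p ^ (-(7 : ℝ) / 4) := by
  have hfd : fderiv ℝ (Xop hgauge) p =
      Pf p • ((-(3 : ℝ) / 4 * rfun p ^ (-(3 : ℝ) / 4 - 1)) • Dr p)
        + (rfun p ^ (-(3 : ℝ) / 4)) • DP p :=
    ((Xop_eventually hp).fderiv_eq).trans (hasFDerivAt_P_rpow hp).fderiv
  rw [Yop, hfd, rpow_shift]
  simp only [ContinuousLinearMap.add_apply, ContinuousLinearMap.smul_apply,
    ContinuousLinearMap.sub_apply, ContinuousLinearMap.neg_apply, Dr_apply, DP, DQ,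
    pi1_apply, pi2_apply, pi3_apply, smul_eq_mul, neg_smul]
  rw [rpow_split hp]
  unfold rfun Pf Qf
  ring

lemma symXY_formula {p : H1} (hp : 0 < rfun p) :
    symXY hgauge p = -3 * Pf p * Qf p * rfun p ^ (-(7 : ℝ) / 4) := by
  rw [symXY, XY_formula hp, YX_formula hp]
  ring

end Stmt7Aux

open Stmt7Aux in
/-- The gauge ρ is H-convex away from the origin, with X²ρ, Y²ρ ≥ 0 explicit and det H(ρ)=0. -/
theorem stmt_7 (p : H1) (hp : p ≠ 0) :
    Xop (Xop hgauge) p =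
      3 * rfun p ^ (-(7 : ℝ) / 4) * (p.2.1 * (p.1 ^ 2 + p.2.1 ^ 2) - p.1 * p.2.2) ^ 2 ∧
    0 ≤ Xop (Xop hgauge) p ∧
    Yop (Yop hgauge) p =
      3 * rfun p ^ (-(7 : ℝ) / 4) * (p.1 * (p.1 ^ 2 + p.2.1 ^ 2) + p.2.1 * p.2.2) ^ 2 ∧
    0 ≤ Yop (Yop hgauge) p ∧
    detH hgauge p = 0 ∧
    PSDat hgauge p := by
  have hr : 0 < rfun p := rfun_pos hp
  have hXX := XX_formula hr
  have hYY := YY_formula hr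
  have hS := symXY_formula hr
  have hu : 0 < rfun p ^ (-(7 : ℝ) / 4) := Real.rpow_pos_of_pos hr _
  refine ⟨?_, ?_, ?_, ?_, ?_, ?_⟩
  · rw [hXX]; unfold Qf; ring
  · rw [hXX]; positivity
  · rw [hYY]; unfold Pf; ring
  · rw [hYY]; positivity
  · rw [detH, hXX, hYY, hS]; ring
  · intro h
    rw [hXX, hYY, hS]
    have key : 3 * rfun p ^ (-(7 : ℝ) / 4) * Qf p ^ 2 * h.1 ^ 2
        + 2 * (-3 * Pf p * Qf p * rfun p ^ (-(7 : ℝ) / 4)) * h.1 * h.2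
        + 3 * rfun p ^ (-(7 : ℝ) / 4) * Pf p ^ 2 * h.2 ^ 2
        = 3 * rfun p ^ (-(7 : ℝ) / 4) * (Qf p * h.1 - Pf p * h.2) ^ 2 := by ring
    rw [key]
    positivity
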